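/- Let ρ : ℝ^N → ℝ be a coherent risk measure (monotone, translation invariant, convex, positively homogeneous). Define α(q) = sup{⟨q, X⟩ : X ∈ ℝ^N, ρ(X) ≤ 0} for q ∈ M₁ and α(q) = +∞ for q ∉ M₁. Then α takes only the values 0 and +∞; moreover the set Q = {q ∈ M₁ : α(q) = 0} is a nonempty, closed, convex subset of M₁, and for every X ∈ ℝ^N, ρ(X) = max_{q ∈ Q} ⟨q, X⟩. -/

import Mathlib

open scoped BigOperators
open Classical

/-- The penalty function `α` associated with a risk measure `ρ`:
`α(q) = sup {⟨q,X⟩ : ρ(X) ≤ 0}` for `q ∈ M₁`, and `+∞` outside `M₁`. -/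
noncomputable def alphaOf {N : ℕ} (ρ : (Fin N → ℝ) → ℝ) (q : Fin N → ℝ) : EReal :=
  if q ∈ stdSimplex ℝ (Fin N) then
    ⨆ X ∈ {X : Fin N → ℝ | ρ X ≤ 0}, (((∑ i, q i * X i : ℝ)) : EReal)
  else ⊤

section Aux

variable {N : ℕ} {ρ : (Fin N → ℝ) → ℝ}

lemma rho_zero_aux (hhom : ∀ (X : Fin N → ℝ) (t : ℝ), 0 ≤ t → ρ (t • X) = t * ρ X) :
    ρ 0 = 0 := by
  simpa using hhom 0 0 le_rfl

lemma rho_subadd_aux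
    (hconv : ∀ X Y : Fin N → ℝ, ∀ t : ℝ, 0 < t → t < 1 →
      ρ (t • X + (1 - t) • Y) ≤ t * ρ X + (1 - t) * ρ Y)
    (hhom : ∀ (X : Fin N → ℝ) (t : ℝ), 0 ≤ t → ρ (t • X) = t * ρ X)
    (X Y : Fin N → ℝ) : ρ (X + Y) ≤ ρ X + ρ Y := by
  have h := hconv X Y (1/2) (by norm_num) (by norm_num)
  have h2 : ρ (X + Y) = 2 * ρ ((1/2 : ℝ) • X + (1 - 1/2 : ℝ) • Y) := by
    have hXY : X + Y = (2:ℝ) • ((1/2 : ℝ) • X + (1 - 1/2 : ℝ) • Y) := by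
      rw [smul_add, smul_smul, smul_smul]; norm_num
    rw [hXY, hhom _ 2 (by norm_num)]
  linarith

lemma rho_low_aux
    (hconv : ∀ X Y : Fin N → ℝ, ∀ t : ℝ, 0 < t → t < 1 →
      ρ (t • X + (1 - t) • Y) ≤ t * ρ X + (1 - t) * ρ Y)
    (hhom : ∀ (X : Fin N → ℝ) (t : ℝ), 0 ≤ t → ρ (t • X) = t * ρ X)
    (X : Fin N → ℝ) (t : ℝ) : t * ρ X ≤ ρ (t • X) := by
  rcases le_or_gt 0 t with ht | ht
  · rw [hhom X t ht]
  · have hneg : ρ X + ρ (-X) ≥ 0 := by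
      have := rho_subadd_aux hconv hhom X (-X)
      have h0 : ρ (X + -X) = 0 := by
        rw [add_neg_cancel]; exact rho_zero_aux hhom
      linarith
    have heq : ρ (t • X) = (-t) * ρ (-X) := by
      have : t • X = (-t) • (-X) := by rw [neg_smul, smul_neg, neg_neg]
      rw [this, hhom _ _ (by linarith)]
    nlinarith

/-- Existence of a subgradient at `X ≠ 0`, via Hahn–Banach. -/
lemma exists_lin_aux
    (hconv : ∀ X Y : Fin N → ℝ, ∀ t : ℝ, 0 < t → t < 1 →
      ρ (t • X + (1 - t) • Y) ≤ t * ρ X + (1 - t) * ρ Y)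
    (hhom : ∀ (X : Fin N → ℝ) (t : ℝ), 0 ≤ t → ρ (t • X) = t * ρ X)
    (X : Fin N → ℝ) (hX : X ≠ 0) :
    ∃ g : (Fin N → ℝ) →ₗ[ℝ] ℝ, g X = ρ X ∧ ∀ Y, g Y ≤ ρ Y := by
  set f : (Fin N → ℝ) →ₗ.[ℝ] ℝ := LinearPMap.mkSpanSingleton X (ρ X) hX with hf
  obtain ⟨g, hg1, hg2⟩ := exists_extension_of_le_sublinear f ρ
    (fun c hc x => hhom x c hc.le) (rho_subadd_aux hconv hhom)
    (by
      rintro ⟨x, hx⟩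
      obtain ⟨c, rfl⟩ := Submodule.mem_span_singleton.mp hx
      have : f ⟨c • X, hx⟩ = c • ρ X := LinearPMap.mkSpanSingleton'_apply _ _ _ c hx
      rw [this, smul_eq_mul]
      exact rho_low_aux hconv hhom X c)
  refine ⟨g, ?_, hg2⟩
  have hXmem : X ∈ f.domain := Submodule.mem_span_singleton_self X
  have := hg1 ⟨X, hXmem⟩
  rw [this]
  exact LinearPMap.mkSpanSingleton'_apply_self _ _ _ _

/-- Characterization of `α q = 0` for `q` in the simplex. -/
lemma alpha_zero_iff_aux (hρ0 : ρ 0 = 0) {q : Fin N → ℝ}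
    (hq : q ∈ stdSimplex ℝ (Fin N)) :
    alphaOf ρ q = 0 ↔ ∀ X : Fin N → ℝ, ρ X ≤ 0 → ∑ i, q i * X i ≤ 0 := by
  unfold alphaOf
  rw [if_pos hq]
  constructor
  · intro h X hX
    have hle := le_iSup₂ (f := fun (X : Fin N → ℝ) (_ : X ∈ {X : Fin N → ℝ | ρ X ≤ 0}) =>
      (((∑ i, q i * X i : ℝ)) : EReal)) X hX
    rw [h] at hle
    exact EReal.coe_nonpos.mp hle
  · intro h
    apply le_antisymm
    · exact iSup₂_le fun X hX => EReal.coe_nonpos.mpr (h X hX)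
    · have h0 : (0 : Fin N → ℝ) ∈ {X : Fin N → ℝ | ρ X ≤ 0} := by
        simp [Set.mem_setOf_eq, hρ0]
      have hle := le_iSup₂ (f := fun (X : Fin N → ℝ) (_ : X ∈ {X : Fin N → ℝ | ρ X ≤ 0}) =>
        (((∑ i, q i * X i : ℝ)) : EReal)) 0 h0
      simpa using hle

/-- The key construction: for every `X`, there is `q` in the simplex with `α q = 0`
and `⟨q, X⟩ = ρ X`. -/
lemma exists_q_aux (hN : 1 ≤ N)
    (hmono : ∀ X Y : Fin N → ℝ, X ≤ Y → ρ X ≤ ρ Y)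
    (htrans : ∀ (X : Fin N → ℝ) (m : ℝ), ρ (X + fun _ => m) = ρ X + m)
    (hconv : ∀ X Y : Fin N → ℝ, ∀ t : ℝ, 0 < t → t < 1 →
      ρ (t • X + (1 - t) • Y) ≤ t * ρ X + (1 - t) * ρ Y)
    (hhom : ∀ (X : Fin N → ℝ) (t : ℝ), 0 ≤ t → ρ (t • X) = t * ρ X)
    (X : Fin N → ℝ) :
    ∃ q : Fin N → ℝ, q ∈ stdSimplex ℝ (Fin N) ∧ alphaOf ρ q = 0 ∧
      ∑ i, q i * X i = ρ X := by
  have hρ0 : ρ 0 = 0 := rho_zero_aux hhom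
  -- get a nonzero vector to apply Hahn–Banach to
  have hFin : Nonempty (Fin N) := ⟨⟨0, hN⟩⟩
  obtain ⟨i0⟩ := hFin
  set X' : Fin N → ℝ := if X = 0 then (fun j => if i0 = j then 1 else 0) else X with hX'
  have hX'ne : X' ≠ 0 := by
    rw [hX']
    split_ifs with h
    · intro hc
      have := congrFun hc i0
      simp at this
    · exact h
  obtain ⟨g, hgX, hgle⟩ := exists_lin_aux hconv hhom X' hX'ne
  set q : Fin N → ℝ := fun i => g (fun j => if i = j then 1 else 0) with hqdef
  have hgsum : ∀ Y : Fin N → ℝ, g Y = ∑ i, q i * Y i := by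
    intro Y
    rw [LinearMap.pi_apply_eq_sum_univ g Y]
    exact Finset.sum_congr rfl fun i _ => by rw [smul_eq_mul, mul_comm]
  -- q is nonnegative
  have hq_nonneg : ∀ i, 0 ≤ q i := by
    intro i
    have hle : (-(fun j => if i = j then (1:ℝ) else 0) : Fin N → ℝ) ≤ 0 := by
      intro j
      simp only [Pi.neg_apply, Pi.zero_apply]
      split_ifs <;> norm_num
    have h1 : ρ (-(fun j => if i = j then (1:ℝ) else 0)) ≤ ρ 0 := hmono _ _ hle
    have h2 := hgle (-(fun j => if i = j then (1:ℝ) else 0))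
    rw [map_neg] at h2
    have : -(q i) ≤ 0 := le_trans h2 (by rw [hρ0] at h1; exact h1)
    linarith
  -- constants
  have hconst : ∀ m : ℝ, ρ (fun _ => m) = m := by
    intro m
    have := htrans 0 m
    simpa [hρ0] using this
  have hg_one : g (fun _ => (1:ℝ)) = 1 := by
    have h1 : g (fun _ => (1:ℝ)) ≤ 1 := by
      have := hgle (fun _ => (1:ℝ))
      rwa [hconst 1] at this
    have h2 : g (fun _ => (-1:ℝ)) ≤ -1 := by
      have := hgle (fun _ => (-1:ℝ))
      rwa [hconst (-1)] at this
    have h3 : (fun _ : Fin N => (-1:ℝ)) = -(fun _ : Fin N => (1:ℝ)) := by funext j; simp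
    rw [h3, map_neg] at h2
    linarith
  have hq_sum : ∑ i, q i = 1 := by
    have := hgsum (fun _ => (1:ℝ))
    rw [hg_one] at this
    simpa using this.symm
  have hq_simplex : q ∈ stdSimplex ℝ (Fin N) := ⟨hq_nonneg, hq_sum⟩
  have hq_dom : ∀ Y : Fin N → ℝ, ρ Y ≤ 0 → ∑ i, q i * Y i ≤ 0 := by
    intro Y hY
    have := hgle Y
    rw [hgsum Y] at this
    linarith
  refine ⟨q, hq_simplex, (alpha_zero_iff_aux hρ0 hq_simplex).mpr hq_dom, ?_⟩
  -- ⟨q, X⟩ = ρ X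
  have hup : ∑ i, q i * X i ≤ ρ X := by
    have hY : ρ (X + fun _ : Fin N => -(ρ X)) ≤ 0 := by rw [htrans]; linarith
    have := hq_dom _ hY
    have hsum : ∑ i, q i * (X + fun _ : Fin N => -(ρ X)) i
        = (∑ i, q i * X i) - ρ X := by
      simp only [Pi.add_apply, mul_add]
      rw [Finset.sum_add_distrib]
      have : ∑ i, q i * (-(ρ X)) = -(ρ X) := by
        rw [← Finset.sum_mul, hq_sum, one_mul]
      rw [this]; ring
    rw [hsum] at this
    linarith
  have hdown : ρ X ≤ ∑ i, q i * X i := by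
    by_cases h : X = 0
    · subst h; simp [hρ0]
    · have hXX' : X' = X := by rw [hX', if_neg h]
      rw [hXX'] at hgX
      rw [← hgsum X, hgX]
  linarith

end Aux

/-- for a coherent risk measure `ρ` (monotone, translation invariant,
convex, positively homogeneous), the associated penalty `α` only takes the values `0`
and `+∞`; moreover `Q = {q ∈ M₁ : α q = 0}` is nonempty, closed and convex, it is
contained in `M₁`, and `ρ(X) = max_{q ∈ Q} ⟨q, X⟩` for every `X`. -/
theorem stmt_4 {N : ℕ} (hN : 1 ≤ N) (ρ : (Fin N → ℝ) → ℝ)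
    (hmono : ∀ X Y : Fin N → ℝ, X ≤ Y → ρ X ≤ ρ Y)
    (htrans : ∀ (X : Fin N → ℝ) (m : ℝ), ρ (X + fun _ => m) = ρ X + m)
    (hconv : ∀ X Y : Fin N → ℝ, ∀ t : ℝ, 0 < t → t < 1 →
      ρ (t • X + (1 - t) • Y) ≤ t * ρ X + (1 - t) * ρ Y)
    (hhom : ∀ (X : Fin N → ℝ) (t : ℝ), 0 ≤ t → ρ (t • X) = t * ρ X) :
    (∀ q : Fin N → ℝ, alphaOf ρ q = 0 ∨ alphaOf ρ q = ⊤) ∧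
    ({q ∈ stdSimplex ℝ (Fin N) | alphaOf ρ q = 0}.Nonempty ∧
      IsClosed {q ∈ stdSimplex ℝ (Fin N) | alphaOf ρ q = 0} ∧
      Convex ℝ {q ∈ stdSimplex ℝ (Fin N) | alphaOf ρ q = 0} ∧
      {q ∈ stdSimplex ℝ (Fin N) | alphaOf ρ q = 0} ⊆ stdSimplex ℝ (Fin N)) ∧
    (∀ X : Fin N → ℝ,
      IsGreatest ((fun q : Fin N → ℝ => ∑ i, q i * X i) ''
        {q ∈ stdSimplex ℝ (Fin N) | alphaOf ρ q = 0}) (ρ X)) := by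
  have hρ0 : ρ 0 = 0 := rho_zero_aux hhom
  -- dichotomy
  have hdich : ∀ q : Fin N → ℝ, alphaOf ρ q = 0 ∨ alphaOf ρ q = ⊤ := by
    intro q
    by_cases hq : q ∈ stdSimplex ℝ (Fin N)
    · by_cases hall : ∀ X : Fin N → ℝ, ρ X ≤ 0 → ∑ i, q i * X i ≤ 0
      · exact Or.inl ((alpha_zero_iff_aux hρ0 hq).mpr hall)
      · right
        push_neg at hall
        obtain ⟨X, hXρ, hXpos⟩ := hall
        unfold alphaOf
        rw [if_pos hq]
        rw [EReal.eq_top_iff_forall_lt]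
        intro y
        set c := ∑ i, q i * X i with hc
        set t : ℝ := (|y| + 1) / c with ht
        have ht0 : 0 ≤ t := div_nonneg (by positivity) hXpos.le
        have htc : t * c = |y| + 1 := by
          rw [ht]; field_simp
        have hmem : ρ (t • X) ≤ 0 := by
          rw [hhom X t ht0]
          exact mul_nonpos_iff.mpr (Or.inl ⟨ht0, hXρ⟩)
        have hval : ∑ i, q i * (t • X) i = t * c := by
          rw [hc, Finset.mul_sum]
          exact Finset.sum_congr rfl fun i _ => by
            simp [Pi.smul_apply, smul_eq_mul]; ring
        have hle := le_iSup₂ (f := fun (Y : Fin N → ℝ) (_ : Y ∈ {X : Fin N → ℝ | ρ X ≤ 0}) =>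
          (((∑ i, q i * Y i : ℝ)) : EReal)) (t • X) hmem
        refine lt_of_lt_of_le ?_ hle
        rw [show (∑ i, q i * (t • X) i) = t * c from hval]
        rw [EReal.coe_lt_coe_iff, htc]
        calc y ≤ |y| := le_abs_self y
        _ < |y| + 1 := by linarith
    · exact Or.inr (by unfold alphaOf; rw [if_neg hq])
  refine ⟨hdich, ⟨?_, ?_, ?_, fun q hq => hq.1⟩, ?_⟩
  · -- nonempty
    obtain ⟨q, hq1, hq2, _⟩ := exists_q_aux hN hmono htrans hconv hhom 0
    exact ⟨q, hq1, hq2⟩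
  · -- closed
    have hset : {q ∈ stdSimplex ℝ (Fin N) | alphaOf ρ q = 0}
        = stdSimplex ℝ (Fin N) ∩
          ⋂ X ∈ {X : Fin N → ℝ | ρ X ≤ 0}, {q : Fin N → ℝ | ∑ i, q i * X i ≤ 0} := by
      ext q
      simp only [Set.mem_setOf_eq, Set.mem_sep_iff, Set.mem_inter_iff, Set.mem_iInter]
      constructor
      · rintro ⟨hq, ha⟩
        exact ⟨hq, fun X hX => (alpha_zero_iff_aux hρ0 hq).mp ha X hX⟩
      · rintro ⟨hq, ha⟩
        exact ⟨hq, (alpha_zero_iff_aux hρ0 hq).mpr fun X hX => ha X hX⟩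
    rw [hset]
    refine (isClosed_stdSimplex _ _).inter (isClosed_biInter fun X hX => ?_)
    exact isClosed_le (by continuity) continuous_const
  · -- convex
    intro q1 hq1 q2 hq2 a b ha hb hab
    have h1 := (alpha_zero_iff_aux hρ0 hq1.1).mp hq1.2
    have h2 := (alpha_zero_iff_aux hρ0 hq2.1).mp hq2.2
    have hmem : a • q1 + b • q2 ∈ stdSimplex ℝ (Fin N) :=
      (convex_stdSimplex ℝ (Fin N)) hq1.1 hq2.1 ha hb hab
    refine ⟨hmem, (alpha_zero_iff_aux hρ0 hmem).mpr fun X hX => ?_⟩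
    have : ∑ i, (a • q1 + b • q2) i * X i
        = a * (∑ i, q1 i * X i) + b * (∑ i, q2 i * X i) := by
      rw [Finset.mul_sum, Finset.mul_sum, ← Finset.sum_add_distrib]
      exact Finset.sum_congr rfl fun i _ => by
        simp [Pi.add_apply, Pi.smul_apply, smul_eq_mul]; ring
    rw [this]
    have := h1 X hX
    have := h2 X hX
    nlinarith
  · -- representation
    intro X
    constructor
    · obtain ⟨q, hq1, hq2, hq3⟩ := exists_q_aux hN hmono htrans hconv hhom X
      exact ⟨q, ⟨hq1, hq2⟩, hq3⟩
    · rintro r ⟨q, ⟨hq1, hq2⟩, rfl⟩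
      have hdom := (alpha_zero_iff_aux hρ0 hq1).mp hq2
      have hY : ρ (X + fun _ : Fin N => -(ρ X)) ≤ 0 := by rw [htrans]; linarith
      have h := hdom _ hY
      have hsum : ∑ i, q i * (X + fun _ : Fin N => -(ρ X)) i
          = (∑ i, q i * X i) - ρ X := by
        simp only [Pi.add_apply, mul_add]
        rw [Finset.sum_add_distrib]
        have : ∑ i, q i * (-(ρ X)) = -(ρ X) := by
          rw [← Finset.sum_mul, hq1.2, one_mul]
        rw [this]; ring
      rw [hsum] at h
      simp only
      linarith
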